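/- Let G be a graph with independent sets I and J of equal size. If I \ J can be k-TAR reconfigured to J \ I in the induced subgraph G[I Δ J], then I can be k-TAR reconfigured to J in G. -/
import Mathlib


/-- `S` is an independent set in `G`. -/
def IsIndepSet {V : Type*} (G : SimpleGraph V) (S : Finset V) : Prop :=
  ∀ u ∈ S, ∀ v ∈ S, ¬ G.Adj u v

/-- `A` can be `k`-TAR reconfigured to `B` inside the induced subgraph `G[U]`:
a sequence of independent sets contained in `U`, starting at `A` and ending at `B`,
where consecutive sets differ by adding or removing a single vertex and every
intermediate set has size at least `|A| - k`. -/
def TARReconfIn {V : Type*} [DecidableEq V] (G : SimpleGraph V) (U : Finset V) (k : ℕ)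
    (A B : Finset V) : Prop :=
  ∃ (n : ℕ) (W : ℕ → Finset V), W 0 = A ∧ W n = B ∧
    (∀ i ≤ n, W i ⊆ U ∧ IsIndepSet G (W i) ∧ A.card ≤ (W i).card + k) ∧
    (∀ i < n, (symmDiff (W i) (W (i + 1))).card ≤ 1)

/-- if `I \ J` can be `k`-TAR reconfigured to `J \ I` in `G[I Δ J]`, then
`I` can be `k`-TAR reconfigured to `J` in `G`. -/
theorem tar_reconf_of_symmDiff {V : Type*} [Fintype V] [DecidableEq V] (G : SimpleGraph V)
    (I J : Finset V) (hI : IsIndepSet G I) (hJ : IsIndepSet G J) (hcard : I.card = J.card)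
    (k : ℕ) (h : TARReconfIn G (symmDiff I J) k (I \ J) (J \ I)) :
    TARReconfIn G Finset.univ k I J := by
  obtain ⟨n, W, h0, hn, hmid, hstep⟩ := h
  refine ⟨n, fun i => (I ∩ J) ∪ W i, ?_, ?_, ?_, ?_⟩
  · show I ∩ J ∪ W 0 = I
    rw [h0]
    ext v; simp [Finset.mem_inter, Finset.mem_sdiff]; tauto
  · show I ∩ J ∪ W n = J
    rw [hn]
    ext v; simp [Finset.mem_inter, Finset.mem_sdiff]; tauto
  · intro i hi
    obtain ⟨hU, hind, hc⟩ := hmid i hi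
    have hdisj : Disjoint (I ∩ J) (W i) := by
      refine Finset.disjoint_left.2 fun v hv hv' => ?_
      have := hU hv'
      rw [Finset.mem_symmDiff] at this
      simp [Finset.mem_inter] at hv
      tauto
    refine ⟨Finset.subset_univ _, ?_, ?_⟩
    · intro u hu v hv
      rw [Finset.mem_union] at hu hv
      rcases hu with hu | hu <;> rcases hv with hv | hv
      · exact hI u (Finset.mem_inter.1 hu).1 v (Finset.mem_inter.1 hv).1
      · -- u ∈ I ∩ J, v ∈ W i ⊆ I Δ J
        have hv' := hU hv
        rw [Finset.mem_symmDiff] at hv'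
        rcases hv' with ⟨hvI, _⟩ | ⟨hvJ, _⟩
        · exact hI u (Finset.mem_inter.1 hu).1 v hvI
        · exact hJ u (Finset.mem_inter.1 hu).2 v hvJ
      · have hu' := hU hu
        rw [Finset.mem_symmDiff] at hu'
        rcases hu' with ⟨huI, _⟩ | ⟨huJ, _⟩
        · exact hI u huI v (Finset.mem_inter.1 hv).1
        · exact hJ u huJ v (Finset.mem_inter.1 hv).2
      · exact hind u hu v hv
    · have hIeq : I.card = (I ∩ J).card + (I \ J).card := by
        rw [← Finset.card_union_of_disjoint (Finset.disjoint_sdiff_inter I J).symm]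
        congr 1
        ext v; simp [Finset.mem_inter, Finset.mem_sdiff]; tauto
      rw [Finset.card_union_of_disjoint hdisj, hIeq]
      omega
  · intro i hi
    refine le_trans (Finset.card_le_card ?_) (hstep i hi)
    intro v hv
    rw [Finset.mem_symmDiff] at hv ⊢
    simp only [Finset.mem_union] at hv
    tauto
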